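/- arXiv:math/0605229 — 2 statements merged into one kernel-verified Lean document; each statement's English description precedes it below -/
import Mathlib

section
/- In a triangulated category D, given a bounded complex A_m → A_{m-1} → ⋯ → A_0 (compositions of consecutive maps are zero) satisfying Hom(A_a, A_b[r]) = 0 for all a > b and r < 0, a right convolution of the complex exists and is unique up to (non-canonical) isomorphism. -/
/-!
Statement 0: In a triangulated category `D`, a bounded complex
`A_m → A_{m-1} → ⋯ → A_0` satisfying `Hom(A_a, A_b[r]) = 0` for `a > b`, `r < 0`,
admits a right convolution, unique up to (non-canonical) isomorphism.
-/

open CategoryTheory CategoryTheory.Limits CategoryTheory.Pretriangulated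

universe v u

/-- A bounded complex `A_m → A_{m-1} → ⋯ → A_0` in a category, encoded by
`obj j = A_j` for `j ≤ m` (values beyond `m` are irrelevant), with differentials
`d j : A_{j+1} ⟶ A_j` whose consecutive composites vanish. -/
structure BddComplex (D : Type u) [Category.{v} D] [Preadditive D] (m : ℕ) where
  obj : ℕ → D
  d : ∀ j : ℕ, obj (j + 1) ⟶ obj j
  comp_zero : ∀ j : ℕ, j + 2 ≤ m → d (j + 1) ≫ d j = 0

variable {D : Type u} [Category.{v} D] [Preadditive D] [HasZeroObject D]
  [HasShift D ℤ] [∀ n : ℤ, (CategoryTheory.shiftFunctor D n).Additive] [Pretriangulated D]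

/-- `d0 : A_0 ⟶ A` is a right convolution of the bounded complex `Z` if there is a
Postnikov system of distinguished triangles `C_{j+1} → A_j → C_j → C_{j+1}[1]`
(for `j < m`), with `C_m ≅ A_m` (via the map `a m`), `C_0 ≅ A`, compatible with
the differentials of `Z` and with `d0`. -/
def IsRightConvolution {m : ℕ} (Z : BddComplex D m) (A : D) (d0 : Z.obj 0 ⟶ A) : Prop :=
  ∃ (C : ℕ → D) (g : ∀ j : ℕ, C (j + 1) ⟶ Z.obj j) (a : ∀ j : ℕ, Z.obj j ⟶ C j)
    (δ : ∀ j : ℕ, C j ⟶ (C (j + 1))⟦(1 : ℤ)⟧) (e : C 0 ≅ A),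
      IsIso (a m) ∧
      (∀ j : ℕ, j < m → Triangle.mk (g j) (a j) (δ j) ∈ distTriang D) ∧
      (∀ j : ℕ, j + 1 ≤ m → a (j + 1) ≫ g j = Z.d j) ∧
      a 0 ≫ e.hom = d0

lemma shift_one_vanish {P Y Y' : D} (e : Y ≅ (shiftFunctor D (1:ℤ)).obj Y')
    (H : ∀ f : P ⟶ Y', f = 0) (h : (shiftFunctor D (1:ℤ)).obj P ⟶ Y) : h = 0 := by
  have h1 : h ≫ e.hom = (shiftFunctor D (1:ℤ)).map ((shiftFunctor D (1:ℤ)).preimage (h ≫ e.hom)) :=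
    ((shiftFunctor D (1:ℤ)).map_preimage _).symm
  rw [H ((shiftFunctor D (1:ℤ)).preimage (h ≫ e.hom)), Functor.map_zero] at h1
  rw [← cancel_mono e.hom, h1, zero_comp]

lemma sysVanish {m : ℕ} (Z : BddComplex D m) (C : ℕ → D)
    (g : ∀ j : ℕ, C (j + 1) ⟶ Z.obj j) (a : ∀ j : ℕ, Z.obj j ⟶ C j)
    (δ : ∀ j : ℕ, C j ⟶ (C (j + 1))⟦(1 : ℤ)⟧)
    (hiso : IsIso (a m))
    (htri : ∀ j : ℕ, j < m → Triangle.mk (g j) (a j) (δ j) ∈ distTriang D)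
    (X : D) (k₀ : ℕ)
    (hX : ∀ p : ℕ, k₀ ≤ p → p ≤ m → ∀ r : ℤ, r < 0 → ∀ f : Z.obj p ⟶ X⟦r⟧, f = 0) :
    ∀ k : ℕ, k₀ ≤ k → k ≤ m → ∀ r : ℤ, r < 0 → ∀ f : C k ⟶ X⟦r⟧, f = 0 := by
  have hm : k₀ ≤ m → ∀ r : ℤ, r < 0 → ∀ f : C m ⟶ X⟦r⟧, f = 0 := by
    intro hk r hr f
    have h0 : a m ≫ f = 0 := hX m hk le_rfl r hr _
    calc f = inv (a m) ≫ (a m ≫ f) := by simp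
      _ = 0 := by rw [h0, comp_zero]
  suffices h : ∀ i k, k₀ ≤ k → k ≤ m → m ≤ k + i → ∀ r : ℤ, r < 0 →
      ∀ f : C k ⟶ X⟦r⟧, f = 0 by
    intro k hk1 hk2
    exact h (m - k) k hk1 hk2 (by omega)
  intro i
  induction i with
  | zero =>
    intro k hk1 hk2 hk3 r hr f
    have hkm : k = m := by omega
    subst hkm
    exact hm hk1 r hr f
  | succ i ih =>
    intro k hk1 hk2 hk3 r hr f
    by_cases hkm : k = m
    · subst hkm; exact hm hk1 r hr f
    · have hklt : k < m := by omega
      have h0 : a k ≫ f = 0 := hX k hk1 (by omega) r hr _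
      obtain ⟨h, hh⟩ := Triangle.yoneda_exact₃ _ (htri k hklt) f h0
      have hz : h = 0 := shift_one_vanish ((shiftFunctorAdd' D (r-1) 1 r (by ring)).app X)
        (fun f' => ih (k+1) (by omega) (by omega) (by omega) (r-1) (by omega) f') h
      rw [hh, hz, comp_zero]; rfl

lemma existsSystem : ∀ (m : ℕ) (Z : BddComplex D m),
    (∀ (p q : ℕ), p ≤ m → q < p → ∀ r : ℤ, r < 0 → ∀ f : Z.obj p ⟶ (Z.obj q)⟦r⟧, f = 0) →
    ∃ (C : ℕ → D) (g : ∀ j : ℕ, C (j + 1) ⟶ Z.obj j) (a : ∀ j : ℕ, Z.obj j ⟶ C j)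
      (δ : ∀ j : ℕ, C j ⟶ (C (j + 1))⟦(1 : ℤ)⟧),
      IsIso (a m) ∧ (∀ j : ℕ, j < m → Triangle.mk (g j) (a j) (δ j) ∈ distTriang D) ∧
      (∀ j : ℕ, j + 1 ≤ m → a (j + 1) ≫ g j = Z.d j) := by
  intro m
  induction m with
  | zero =>
    intro Z _
    exact ⟨Z.obj, fun j => Z.d j, fun j => 𝟙 _, fun j => 0, inferInstance,
      fun j hj => absurd hj (by omega), fun j hj => absurd hj (by omega)⟩
  | succ m ih =>
    intro Z hvan
    let Z' : BddComplex D m :=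
      ⟨fun j => Z.obj (j + 1), fun j => Z.d (j + 1), fun j hj => Z.comp_zero (j + 1) (by omega)⟩
    have hvan' : ∀ (p q : ℕ), p ≤ m → q < p → ∀ r : ℤ, r < 0 →
        ∀ f : Z'.obj p ⟶ (Z'.obj q)⟦r⟧, f = 0 :=
      fun p q hp hq r hr f => hvan (p+1) (q+1) (by omega) (by omega) r hr f
    obtain ⟨C', g', a', δ', hiso', htri', hcmp'⟩ := ih Z' hvan'
    have hg0 : ∃ g0 : C' 0 ⟶ Z.obj 0, a' 0 ≫ g0 = Z.d 0 := by
      rcases Nat.eq_zero_or_pos m with hm | hm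
      · subst hm
        haveI := hiso'
        exact ⟨inv (a' 0) ≫ Z.d 0, by simp⟩
      · have hz : g' 0 ≫ Z.d 0 = 0 := by
          have h1 : a' 1 ≫ (g' 0 ≫ Z.d 0) = 0 := by
            rw [← Category.assoc, hcmp' 0 (by omega)]
            exact Z.comp_zero 0 (by omega)
          rcases Nat.lt_or_ge 1 m with hm2 | hm2
          · obtain ⟨h, hh⟩ := Triangle.yoneda_exact₃ _ (htri' 1 hm2) (g' 0 ≫ Z.d 0) h1
            have hzero : h = 0 := shift_one_vanish
              (((shiftFunctorCompIsoId D (-1:ℤ) (1:ℤ) (by ring)).app (Z.obj 0)).symm)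
              (fun f' => sysVanish Z' C' g' a' δ' hiso' htri' (Z.obj 0) 0
                (fun p _ hp r hr f => hvan (p+1) 0 (by omega) (by omega) r hr f)
                2 (by omega) (by omega) (-1) (by omega) f') h
            rw [hzero, comp_zero] at hh; exact hh
          · have hm1 : m = 1 := by omega
            subst hm1
            haveI := hiso'
            calc g' 0 ≫ Z.d 0 = inv (a' 1) ≫ (a' 1 ≫ (g' 0 ≫ Z.d 0)) := by simp
              _ = 0 := by rw [h1, comp_zero]
        obtain ⟨g0, hg0'⟩ := Triangle.yoneda_exact₂ _ (htri' 0 hm) (Z.d 0) hz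
        exact ⟨g0, hg0'.symm⟩
    obtain ⟨g0, hg0⟩ := hg0
    obtain ⟨C0, a0, δ0, hT0⟩ := distinguished_cocone_triangle g0
    refine ⟨fun j => match j with | 0 => C0 | (j+1) => C' j,
      fun j => match j with | 0 => g0 | (j+1) => g' j,
      fun j => match j with | 0 => a0 | (j+1) => a' j,
      fun j => match j with | 0 => δ0 | (j+1) => δ' j,
      hiso', ?_, ?_⟩
    · intro j hj
      match j with
      | 0 => exact hT0
      | (j+1) => exact htri' j (by omega)
    · intro j hj
      match j with
      | 0 => exact hg0
      | (j+1) => exact hcmp' j (by omega)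

/-- **Existence and uniqueness of right convolutions** (Kawamata, Lemmas 2.1 and 2.4):
if `Hom(A_a, A_b[r]) = 0` for all `a > b` and `r < 0`, then the bounded complex
`A_m → ⋯ → A_0` has a right convolution, and it is unique up to isomorphism. -/
theorem rightConvolution_exists_and_unique {m : ℕ} (Z : BddComplex D m)
    (hvan : ∀ (a b : ℕ), a ≤ m → b < a → ∀ (r : ℤ), r < 0 →
      ∀ (f : Z.obj a ⟶ (Z.obj b)⟦r⟧), f = 0) :
    (∃ (A : D) (d0 : Z.obj 0 ⟶ A), IsRightConvolution Z A d0) ∧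
    (∀ (A A' : D) (d0 : Z.obj 0 ⟶ A) (d0' : Z.obj 0 ⟶ A'),
      IsRightConvolution Z A d0 → IsRightConvolution Z A' d0' → Nonempty (A ≅ A')) := by
  constructor
  · obtain ⟨C, g, a, δ, h1, h2, h3⟩ := existsSystem m Z hvan
    exact ⟨C 0, a 0, C, g, a, δ, Iso.refl _, h1, h2, h3, Category.comp_id _⟩
  · rintro A A' d0 d0' ⟨C, g, a, δ, e, h1, h2, h3, -⟩ ⟨C', g', a', δ', e', h1', h2', h3', -⟩
    haveI := h1
    haveI := h1'
    have key : ∀ i k, k ≤ m → m ≤ k + i → ∃ φ : C k ≅ C' k, a k ≫ φ.hom = a' k := by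
      intro i
      induction i with
      | zero =>
        intro k hk hk2
        have hkm : k = m := by omega
        subst hkm
        exact ⟨(asIso (a k)).symm ≪≫ asIso (a' k), by simp⟩
      | succ i ih =>
        intro k hk hk2
        by_cases hkm : k = m
        · subst hkm
          exact ⟨(asIso (a k)).symm ≪≫ asIso (a' k), by simp⟩
        · have hklt : k < m := by omega
          obtain ⟨φ₁, hφ₁⟩ := ih (k+1) (by omega) (by omega)
          have hg : φ₁.hom ≫ g' k = g k := by
            have hd : a (k+1) ≫ (g k - φ₁.hom ≫ g' k) = 0 := by
              rw [Preadditive.comp_sub, h3 k (by omega), ← Category.assoc, hφ₁,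
                h3' k (by omega), sub_self]
            have hdz : g k - φ₁.hom ≫ g' k = 0 := by
              by_cases hk1 : k + 1 = m
              · haveI : IsIso (a (k+1)) := hk1.symm ▸ h1
                calc g k - φ₁.hom ≫ g' k
                    = inv (a (k+1)) ≫ (a (k+1) ≫ (g k - φ₁.hom ≫ g' k)) := by simp
                  _ = 0 := by rw [hd, comp_zero]
              · have hk1m : k + 1 < m := by omega
                obtain ⟨h, hh⟩ := Triangle.yoneda_exact₃ _ (h2 (k+1) hk1m)
                  (g k - φ₁.hom ≫ g' k) hd
                have h0 : h = 0 := shift_one_vanish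
                  (((shiftFunctorCompIsoId D (-1:ℤ) (1:ℤ) (by ring)).app (Z.obj k)).symm)
                  (fun f' => sysVanish Z C g a δ h1 h2 (Z.obj k) (k+1)
                    (fun p hp hpm r hr f => hvan p k hpm (by omega) r hr f)
                    (k+2) (by omega) (by omega) (-1) (by omega) f') h
                rw [hh, h0, comp_zero]; rfl
            rw [← sub_eq_zero, ← neg_sub (g k) (φ₁.hom ≫ g' k), hdz, neg_zero]
          obtain ⟨c, hc1, hc2⟩ := complete_distinguished_triangle_morphism
            (Triangle.mk (g k) (a k) (δ k)) (Triangle.mk (g' k) (a' k) (δ' k))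
            (h2 k hklt) (h2' k hklt) φ₁.hom (𝟙 (Z.obj k))
            (by change g k ≫ 𝟙 _ = φ₁.hom ≫ g' k; rw [Category.comp_id, hg])
          have hcm : IsIso c := by
            have := isIso₃_of_isIso₁₂
              (T := Triangle.mk (g k) (a k) (δ k)) (T' := Triangle.mk (g' k) (a' k) (δ' k))
              { hom₁ := φ₁.hom, hom₂ := 𝟙 (Z.obj k), hom₃ := c,
                comm₁ := by change g k ≫ 𝟙 _ = φ₁.hom ≫ g' k; rw [Category.comp_id, hg],
                comm₂ := hc1, comm₃ := hc2 }
              (h2 k hklt) (h2' k hklt) (by exact (inferInstance : IsIso φ₁.hom)) (by exact (inferInstance : IsIso (𝟙 (Z.obj k))))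
            exact this
          haveI := hcm
          exact ⟨@asIso _ _ _ _ c hcm, hc1.trans (Category.id_comp _)⟩
    obtain ⟨φ0, -⟩ := key m 0 (Nat.zero_le m) (by omega)
    exact ⟨e.symm ≪≫ φ0 ≪≫ e'⟩
end

section
/- Let A be an abelian category with finite dimensional Hom spaces and let {P_i}_{i∈ℤ} be an ample sequence in A. Then every object A ∈ A admits a resolution ⋯ → A_i^{⊕k_i} → ⋯ → A_0^{⊕k_0} → A → 0 where each A_j belongs to {P_i} and k_j ∈ ℕ. -/
/-!
Statement 4: in a K-linear abelian category with finite dimensional Hom's,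
every object admits a resolution by finite direct sums of members of an ample
sequence.
-/

open CategoryTheory CategoryTheory.Limits

attribute [local instance] CategoryTheory.Limits.HasFiniteBiproducts.of_hasFiniteProducts

universe w v u

variable (K : Type*) [Field K]
variable {𝒜 : Type u} [Category.{v} 𝒜] [Abelian 𝒜] [Linear K 𝒜]
  [HasDerivedCategory.{w} 𝒜]

/-- An object of the abelian category `𝒜` viewed in its derived category
(placed in degree `0`). -/
noncomputable abbrev sQ (X : 𝒜) : DerivedCategory 𝒜 :=
  DerivedCategory.Q.obj ((HomologicalComplex.single 𝒜 (ComplexShape.up ℤ) 0).obj X)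

/-- `{P_i}_{i ∈ ℤ}` is an ample sequence if for every `B` and all `i ≪ 0`:
(1) the natural morphism `Hom(P_i, B) ⊗ P_i → B` is surjective (expressed by
saying that the morphisms `P_i → B` are jointly epimorphic);
(2) `Hom_{D^b(𝒜)}(P_i, B[j]) = 0` for `j ≠ 0`;
(3) `Hom(B, P_i) = 0`. -/
def IsAmpleSequence (P : ℤ → 𝒜) : Prop :=
  ∀ B : 𝒜, ∃ i₀ : ℤ, ∀ i : ℤ, i ≤ i₀ →
    (∀ ⦃C : 𝒜⦄ (g : B ⟶ C), (∀ f : P i ⟶ B, f ≫ g = 0) → g = 0) ∧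
    (∀ j : ℤ, j ≠ 0 → ∀ φ : sQ (P i) ⟶ (sQ B)⟦j⟧, φ = 0) ∧
    (∀ f : B ⟶ P i, f = 0)

/-- Auxiliary exactness lemma: if `e : X ⟶ kernel g` is an epimorphism and
`G` has the same "kernel-detecting" property as `g`, then the short complex
`X ⟶ Y ⟶ W` given by `e ≫ kernel.ι g` and `G` is exact. -/
lemma exact_aux {X Y Z W : 𝒜} (g : Y ⟶ Z) (G : Y ⟶ W)
    (hG : ∀ ⦃C : 𝒜⦄ (x : C ⟶ Y), x ≫ G = 0 → x ≫ g = 0)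
    (e : X ⟶ kernel g) (he : Epi e) (w : (e ≫ kernel.ι g) ≫ G = 0) :
    (ShortComplex.mk (e ≫ kernel.ι g) G w).Exact := by
  haveI := he
  rw [ShortComplex.exact_iff_exact_up_to_refinements]
  intro A' x₂ hx₂
  have h := hG x₂ hx₂
  refine ⟨pullback e (kernel.lift g x₂ h), pullback.snd _ _, inferInstance,
    pullback.fst _ _, ?_⟩
  have hc := pullback.condition (f := e) (g := kernel.lift g x₂ h)
  dsimp only [ShortComplex.mk]
  rw [← Category.assoc, hc, Category.assoc, kernel.lift_ι]

/-- Every object admits an epimorphism from a finite direct sum of members of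
an ample sequence. -/
lemma exists_epi_from_biproduct
    [∀ X Y : 𝒜, FiniteDimensional K (X ⟶ Y)]
    (P : ℤ → 𝒜) (hP : IsAmpleSequence P) (B : 𝒜) :
    ∃ (i : ℤ) (k : ℕ) (e : (⨁ fun _ : Fin k => P i) ⟶ B), Epi e := by
  obtain ⟨i₀, h⟩ := hP B
  obtain ⟨h1, -, -⟩ := h i₀ le_rfl
  let b := Module.finBasis K (P i₀ ⟶ B)
  refine ⟨i₀, _, biproduct.desc b, ?_⟩
  rw [Preadditive.epi_iff_cancel_zero]
  intro R g hg
  apply h1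
  intro f
  have hb : ∀ j, b j ≫ g = 0 := by
    intro j
    have : (biproduct.ι (fun _ : Fin _ => P i₀) j ≫ biproduct.desc b) ≫ g = 0 := by
      rw [Category.assoc, hg, comp_zero]
    simpa using this
  conv_lhs => rw [← b.sum_repr f]
  rw [Preadditive.sum_comp]
  refine Finset.sum_eq_zero fun j _ => ?_
  rw [Linear.smul_comp, hb, smul_zero]

/-- **Existence of resolutions by an ample sequence**: every object `A` of `𝒜`
admits a resolution `⋯ → P_{i_j}^{⊕ k_j} → ⋯ → P_{i_0}^{⊕ k_0} → A → 0`
by finite direct sums of members of the ample sequence. -/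
theorem exists_resolution_by_ample_sequence
    [∀ X Y : 𝒜, FiniteDimensional K (X ⟶ Y)]
    (P : ℤ → 𝒜) (hP : IsAmpleSequence P) (A : 𝒜) :
    ∃ (idx : ℕ → ℤ) (k : ℕ → ℕ)
      (d : ∀ j : ℕ, (⨁ fun _ : Fin (k (j + 1)) => P (idx (j + 1))) ⟶
        (⨁ fun _ : Fin (k j) => P (idx j)))
      (ε : (⨁ fun _ : Fin (k 0) => P (idx 0)) ⟶ A)
      (hd0 : d 0 ≫ ε = 0) (hdd : ∀ j : ℕ, d (j + 1) ≫ d j = 0),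
      Epi ε ∧ (ShortComplex.mk (d 0) ε hd0).Exact ∧
        ∀ j : ℕ, (ShortComplex.mk (d (j + 1)) (d j) (hdd j)).Exact := by
  choose i k e he using exists_epi_from_biproduct K P hP
  -- the sequence of successive kernels
  let seq : ℕ → 𝒜 := fun n => Nat.rec (motive := fun _ => 𝒜) A (fun _ B => kernel (e B)) n
  have hseq : ∀ n, seq (n + 1) = kernel (e (seq n)) := fun _ => rfl
  refine ⟨fun j => i (seq j), fun j => k (seq j),
    fun j => e (seq (j + 1)) ≫ kernel.ι (e (seq j)), e (seq 0), ?_, ?_, ?_, ?_, ?_⟩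
  · rw [Category.assoc, kernel.condition, comp_zero]
  · intro j
    rw [Category.assoc, ← Category.assoc (kernel.ι (e (seq (j + 1)))),
      kernel.condition, zero_comp, comp_zero]
  · exact he (seq 0)
  · exact exact_aux (e (seq 0)) (e (seq 0)) (fun C x hx => hx) (e (seq 1))
      (he (seq 1)) _
  · intro j
    refine exact_aux (e (seq (j + 1))) (e (seq (j + 1)) ≫ kernel.ι (e (seq j)))
      (fun C x hx => ?_) (e (seq (j + 2))) (he (seq (j + 2))) _
    rw [← Category.assoc] at hx
    exact zero_of_comp_mono _ hx
end
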